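/- For every integer sequence μ ∈ ℤ^k, the immaculate noncommutative symmetric function decomposes into complete homogeneous noncommutative symmetric functions as I_μ = Σ_γ ∏_{r=1}^{k} ε(h(r,τ_r))·H_{Δ(h(r,τ_r))}, where the sum is over all tunnel hook coverings γ (with chosen tunnel cells τ_1,…,τ_k) of the diagram D_μ = D_{μ/(0,…,0)}, and the noncommutative product is taken in the order r = 1, 2, …, k. -/

import Mathlib

open scoped BigOperators

/-- NSym modeled as the free noncommutative ℚ-algebra on generators indexed by ℕ
(the generator `n` playing the role of `H_n` for `n ≥ 1`). -/
abbrev NSym : Type := FreeAlgebra ℚ ℕ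

/-- The complete homogeneous noncommutative symmetric functions, extended to ℤ:
`H 0 = 1`, `H n = 0` for `n < 0`, and `H n` the `n`-th generator for `n ≥ 1`. -/
noncomputable def H (n : ℤ) : NSym :=
  if n < 0 then 0 else if n = 0 then 1 else FreeAlgebra.ι ℚ n.toNat

/-- `DecFrom k r ν` : `ν_r ≥ ν_{r+1} ≥ … ≥ ν_k` (1-based indexing). -/
def DecFrom (k r : ℕ) (ν : ℕ → ℕ) : Prop :=
  ∀ i, r ≤ i → i < k → ν (i + 1) ≤ ν i

/-- `(p,q)` is a boundary cell of the partial GBPR diagram `D^{(r-1)}_{μ/ν}`. -/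
def IsBoundary (k r : ℕ) (μ : ℕ → ℤ) (ν : ℕ → ℕ) (p q : ℕ) : Prop :=
  r ≤ p ∧ p ≤ k ∧
    (if p = r then
      ν r + 1 ≤ q ∧ (q : ℤ) ≤ max ((ν r : ℤ) + 1) (max (μ r) (2 * (ν r : ℤ) - μ r))
    else
      ν p + 1 ≤ q ∧ q ≤ ν (p - 1) + 1)

/-- `(p,q)` is a tunnel cell of `D^{(r-1)}_{μ/ν}`. -/
def IsTunnel (k r : ℕ) (μ : ℕ → ℤ) (ν : ℕ → ℕ) (p q : ℕ) : Prop :=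
  IsBoundary k r μ ν p q ∧ q = ν p + 1

/-- The set of boundary cells of `D^{(r-1)}_{μ/ν}` not tunnel cells. -/
def IsN (k r : ℕ) (μ : ℕ → ℤ) (ν : ℕ → ℕ) (p q : ℕ) : Prop :=
  IsBoundary k r μ ν p q ∧ ¬ IsTunnel k r μ ν p q

/-- The tunnel hook `h(r,τ)` for a tunnel cell `τ = (p,q)` of `D^{(r-1)}_{μ/ν}`:
all boundary cells in rows `r` through `p`. -/
def hook (k r : ℕ) (μ : ℕ → ℤ) (ν : ℕ → ℕ) (p : ℕ) : Set (ℕ × ℕ) :=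
  {c : ℕ × ℕ | IsBoundary k r μ ν c.1 c.2 ∧ c.1 ≤ p}

/-- The value `Δ(h(r,τ)) = (μ_r − ν_r) + (ν_r + 1 − q) + (p − r)` for `τ = (p,q)`. -/
def hookDelta (μ : ℕ → ℤ) (ν : ℕ → ℕ) (r p q : ℕ) : ℤ :=
  (μ r - (ν r : ℤ)) + (((ν r : ℤ) + 1) - (q : ℤ)) + ((p : ℤ) - (r : ℤ))

/-- The update `ν ↦ ν^{(r)}`: `ν'_i = ν_{i-1} + 1` for `r < i ≤ p`, else `ν'_i = ν_i`. -/
def nuUpdate (ν : ℕ → ℕ) (r p : ℕ) : ℕ → ℕ := fun i =>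
  if r < i ∧ i ≤ p then ν (i - 1) + 1 else ν i

/-- The sequence `ν^{(0)}, ν^{(1)}, …` of intermediate shapes of a tunnel hook covering
with terminal rows `p 1, p 2, …`. -/
def nuSeq (ν₀ : ℕ → ℕ) (p : ℕ → ℕ) : ℕ → ℕ → ℕ
  | 0 => ν₀
  | r + 1 => nuUpdate (nuSeq ν₀ p r) (r + 1) (p (r + 1))

/-- A tunnel hook covering of `D_{μ/ν₀}` : for each `r = 1, …, k` a tunnel cell
`(p r, q r)` of `D^{(r-1)}_{μ/ν^{(r-1)}}` (values outside `1 ≤ r ≤ k` normalized to `0`). -/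
structure THC (k : ℕ) (μ : ℕ → ℤ) (ν₀ : ℕ → ℕ) where
  p : ℕ → ℕ
  q : ℕ → ℕ
  tunnel : ∀ r, 1 ≤ r → r ≤ k → IsTunnel k r μ (nuSeq ν₀ p (r - 1)) (p r) (q r)
  p_out : ∀ r, r = 0 ∨ k < r → p r = 0
  q_out : ∀ r, r = 0 ∨ k < r → q r = 0

/-- Row-ordered noncommutative determinant (Laplace expansion from the top row down). -/
noncomputable def ndet {k : ℕ} (A : Fin k → Fin k → NSym) : NSym :=
  ∑ σ : Equiv.Perm (Fin k),
    ((Equiv.Perm.sign σ : ℤ) • (List.ofFn fun i => A i (σ i)).prod)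

/-- The immaculate function `I_μ = ndet (H_{μ_i + j − i})` (1-based `μ`). -/
noncomputable def Imm (k : ℕ) (μ : ℕ → ℤ) : NSym :=
  ndet fun i j : Fin k => H (μ (i.1 + 1) + ((j.1 : ℤ) + 1) - ((i.1 : ℤ) + 1))

/-- The skew immaculate function `I_{μ/ν} = ndet (H_{(μ_i − i) − (ν_j − j)})`. -/
noncomputable def ImmSkew (k : ℕ) (μ ν : ℕ → ℤ) : NSym :=
  ndet fun i j : Fin k =>
    H ((μ (i.1 + 1) - ((i.1 : ℤ) + 1)) - (ν (j.1 + 1) - ((j.1 : ℤ) + 1)))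

/-- The signed product `∏_{r=1}^{k} ε(h(r,τ_r)) H_{Δ(h(r,τ_r))}` attached to a
tunnel hook covering, the product taken in the order `r = 1, …, k`. -/
noncomputable def thcTerm (k : ℕ) (μ : ℕ → ℤ) (ν₀ : ℕ → ℕ) (γ : THC k μ ν₀) : NSym :=
  (List.ofFn fun r : Fin k =>
    (-1 : NSym) ^ (γ.p (r.1 + 1) - (r.1 + 1)) *
      H (hookDelta μ (nuSeq ν₀ γ.p r.1) (r.1 + 1) (γ.p (r.1 + 1)) (γ.q (r.1 + 1)))).prod
/-- Two cells are adjacent iff their taxicab distance is 1. -/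
def Adj (c d : ℕ × ℕ) : Prop :=
  ((c.1 : ℤ) - (d.1 : ℤ)).natAbs + ((c.2 : ℤ) - (d.2 : ℤ)).natAbs = 1

/-- A set of cells is connected: any two of its cells are joined by a chain of
cells of the set in which consecutive cells are adjacent. -/
def ConnectedSet (C : Set (ℕ × ℕ)) : Prop :=
  ∀ c ∈ C, ∀ d ∈ C, ∃ l : List (ℕ × ℕ),
    l.head? = some c ∧ l.getLast? = some d ∧ (∀ x ∈ l, x ∈ C) ∧ l.Chain' Adj

/-- `m_r = #{ i < r : σ_i > σ_r }`. -/
def mcount {k : ℕ} (σ : Equiv.Perm (Fin k)) (r : Fin k) : ℕ :=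
  (Finset.univ.filter fun i : Fin k => i < r ∧ σ r < σ i).card

/-- The set `{σ_{r+1}, …, σ_k}` of one-line (1-based) values of `σ` at positions `> r`. -/
def onelineTail {k : ℕ} (σ : Equiv.Perm (Fin k)) (r : ℕ) : Finset ℕ :=
  (Finset.univ.filter fun i : Fin k => r < i.1 + 1).image fun i => (σ i).1 + 1

/-- `beta σ r t` : the `t`-th smallest element of `{σ_{r+1}, …, σ_k}`. -/
def beta {k : ℕ} (σ : Equiv.Perm (Fin k)) (r t : ℕ) : ℕ :=
  ((onelineTail σ r).sort (· ≤ ·)).getD (t - 1) 0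

/-- The exponent `δ` in the sign of a linear permutation `π ∈ A_{k,m}`. -/
def lpInv {k m : ℕ} (π : Fin m ↪ Fin k) : ℕ :=
  (Finset.univ.filter fun p : Fin m × Fin m => p.1 < p.2 ∧ π p.2 < π p.1).card +
  (Finset.univ.filter fun p : Fin m × Fin k => (∀ t, π t ≠ p.2) ∧ p.2 < π p.1).card

/-- `betaC π j` : the `j`-th smallest element of `{1,…,k} ∖ {π_1,…,π_m}` (1-based values). -/
def betaC {k m : ℕ} (π : Fin m ↪ Fin k) (j : ℕ) : ℕ :=
  (((Finset.univ.filter fun q : Fin k => ∀ t, π t ≠ q).image fun q => q.1 + 1).sort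
    (· ≤ ·)).getD (j - 1) 0

/-- Coarsening `Θ(α,S)` of a sequence: replace the comma at each position in `S`
(1-based; position `i` lies between parts `i` and `i+1`) by addition. -/
def theta {α : Type} [Add α] (S : Finset ℕ) : ℕ → List α → List α
  | _, [] => []
  | _, [a] => [a]
  | i, a :: b :: rest =>
      if i ∈ S then theta S (i + 1) ((a + b) :: rest)
      else a :: theta S (i + 1) (b :: rest)
  termination_by i l => l.length

noncomputable def Hlist (β : List ℤ) : NSym := (β.map H).prod

/-- The ribbon function `R_β = Σ_{γ ⪰ β} (−1)^{ℓ(β)−ℓ(γ)} H_γ`, with `R_β = 0`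
whenever `β` has a part `≤ 0`. -/
noncomputable def Ribbon (β : List ℤ) : NSym :=
  if ∀ x ∈ β, 0 < x then
    ∑ S ∈ (Finset.Icc 1 (β.length - 1)).powerset,
      (-1 : NSym) ^ (β.length - (theta S 1 β).length) * Hlist (theta S 1 β)
  else 0

/-! ### Auxiliary development for the main theorem -/

section Aux

open Finset Equiv Equiv.Perm

/-! #### Basic facts about `DecFrom`, `nuUpdate`, `nuSeq`, tunnels -/

lemma decFrom_update {k r p : ℕ} {ν : ℕ → ℕ} (h : DecFrom k r ν) (h1 : r ≤ p) (h2 : p ≤ k) :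
    DecFrom k (r + 1) (nuUpdate ν r p) := by
  intro i hi hik
  unfold nuUpdate
  simp only [Nat.add_sub_cancel]
  by_cases hip : i + 1 ≤ p
  · rw [if_pos ⟨by omega, hip⟩, if_pos ⟨by omega, by omega⟩]
    have h1' := h (i - 1) (by omega) (by omega)
    rw [show i - 1 + 1 = i by omega] at h1'
    omega
  · rw [if_neg (by omega)]
    by_cases hip2 : i ≤ p
    · rw [if_pos ⟨by omega, hip2⟩]
      have e1 := h i (by omega) hik
      have e2 := h (i - 1) (by omega) (by omega)
      rw [show i - 1 + 1 = i by omega] at e2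
      omega
    · rw [if_neg (by omega)]
      exact h i (by omega) hik

lemma isTunnel_of {k r p : ℕ} {μ : ℕ → ℤ} {ν : ℕ → ℕ} (hd : DecFrom k r ν)
    (h1 : r ≤ p) (h2 : p ≤ k) : IsTunnel k r μ ν p (ν p + 1) := by
  refine ⟨⟨h1, h2, ?_⟩, rfl⟩
  by_cases hpr : p = r
  · rw [if_pos hpr]; subst hpr
    refine ⟨le_refl _, ?_⟩
    have : ((ν p + 1 : ℕ) : ℤ) = (ν p : ℤ) + 1 := by push_cast; ring
    rw [this]
    exact le_max_left _ _
  · rw [if_neg hpr]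
    refine ⟨le_refl _, ?_⟩
    have := hd (p - 1) (by omega) (by omega)
    rw [show p - 1 + 1 = p by omega] at this
    omega

def ValidUpTo (k r : ℕ) (p : ℕ → ℕ) : Prop := ∀ s, 1 ≤ s → s ≤ r → s ≤ p s ∧ p s ≤ k

lemma decFrom_nuSeq {k : ℕ} {p : ℕ → ℕ} :
    ∀ r, r ≤ k → ValidUpTo k r p → DecFrom k (r + 1) (nuSeq (fun _ => 0) p r)
  | 0, _, _ => fun _ _ _ => le_rfl
  | r + 1, hk, hv => by
    have ih := decFrom_nuSeq r (by omega) (fun s hs hsr => hv s hs (by omega))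
    exact decFrom_update ih (hv (r + 1) (by omega) le_rfl).1 (hv (r + 1) (by omega) le_rfl).2

lemma THC.eq_of_p {k : ℕ} {μ : ℕ → ℤ} {ν₀ : ℕ → ℕ} {γ γ' : THC k μ ν₀} (h : γ.p = γ'.p) :
    γ = γ' := by
  obtain ⟨p, q, t, po, qo⟩ := γ
  obtain ⟨p', q', t', po', qo'⟩ := γ'
  simp only at h
  subst h
  have hq : q = q' := by
    funext r
    by_cases hr : 1 ≤ r ∧ r ≤ k
    · rw [(t r hr.1 hr.2).2, (t' r hr.1 hr.2).2]
    · rw [qo r (by omega), qo' r (by omega)]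
  subst hq
  rfl

/-! #### Ranks in finite sets of naturals -/

def rk (T : Finset ℕ) (x : ℕ) : ℕ := (T.filter (· ≤ x)).card

lemma rk_lt_rk {T : Finset ℕ} {x y : ℕ} (hy : y ∈ T) (hxy : x < y) : rk T x < rk T y := by
  have hsub : T.filter (· ≤ x) ⊆ T.filter (· ≤ y) := by
    intro a ha
    simp only [Finset.mem_filter] at ha ⊢
    exact ⟨ha.1, by omega⟩
  apply Finset.card_lt_card
  rw [Finset.ssubset_iff_of_subset hsub]
  exact ⟨y, by simp [hy], by simp; omega⟩

lemma rk_le_rk {T : Finset ℕ} {x y : ℕ} (hxy : x ≤ y) : rk T x ≤ rk T y := by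
  apply Finset.card_le_card
  intro a ha
  simp only [Finset.mem_filter] at ha ⊢
  exact ⟨ha.1, by omega⟩

lemma rk_inj {T : Finset ℕ} {x y : ℕ} (hx : x ∈ T) (hy : y ∈ T) (h : rk T x = rk T y) :
    x = y := by
  rcases lt_trichotomy x y with hl | he | hg
  · exact absurd h (rk_lt_rk hy hl).ne
  · exact he
  · exact absurd h.symm (rk_lt_rk hx hg).ne

lemma rk_erase_of_lt {T : Finset ℕ} {c f : ℕ} (hfc : f < c) : rk (T.erase c) f = rk T f := by
  unfold rk
  rw [Finset.filter_erase, Finset.erase_eq_of_notMem]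
  simp only [Finset.mem_filter]
  omega

lemma rk_erase_of_gt {T : Finset ℕ} {c f : ℕ} (hc : c ∈ T) (hcf : c < f) :
    rk (T.erase c) f = rk T f - 1 := by
  unfold rk
  rw [Finset.filter_erase, Finset.card_erase_of_mem]
  simp only [Finset.mem_filter]
  exact ⟨hc, by omega⟩

/-! #### The permutation data `sOf`, `cnt`, `pOf` -/

def cnt (k : ℕ) (σ : Equiv.Perm (Fin k)) (r : ℕ) : ℕ :=
  if h : 1 ≤ r ∧ r ≤ k then
    (Finset.univ.filter fun s : Fin k => r ≤ s.1 ∧ σ s < σ ⟨r - 1, by omega⟩).card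
  else 0

def pOf (k : ℕ) (σ : Equiv.Perm (Fin k)) (r : ℕ) : ℕ :=
  if 1 ≤ r ∧ r ≤ k then r + cnt k σ r else 0

lemma cnt_eq {k : ℕ} (σ : Equiv.Perm (Fin k)) {r : ℕ} (h1 : 1 ≤ r) (h2 : r ≤ k)
    (hh : r - 1 < k) :
    cnt k σ r = (Finset.univ.filter fun s : Fin k => r ≤ s.1 ∧ σ s < σ ⟨r - 1, hh⟩).card := by
  unfold cnt
  rw [dif_pos ⟨h1, h2⟩]

lemma card_filter_le_val (k m : ℕ) :
    (Finset.univ.filter fun s : Fin k => m ≤ s.1).card = k - m := by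
  have himg : (Finset.univ.filter fun s : Fin k => m ≤ s.1).image Fin.val = Finset.Ico m k := by
    ext v
    simp only [Finset.mem_image, Finset.mem_filter, Finset.mem_univ, true_and, Finset.mem_Ico]
    constructor
    · rintro ⟨s, hm, rfl⟩; exact ⟨hm, s.2⟩
    · rintro ⟨h1, h2⟩; exact ⟨⟨v, h2⟩, h1, rfl⟩
  have := Finset.card_image_of_injective
    (Finset.univ.filter fun s : Fin k => m ≤ s.1) Fin.val_injective
  rw [himg] at this
  rw [← this, Nat.card_Ico]

lemma cnt_le {k : ℕ} (σ : Equiv.Perm (Fin k)) {r : ℕ} (h1 : 1 ≤ r) (h2 : r ≤ k) :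
    cnt k σ r ≤ k - r := by
  rw [cnt_eq σ h1 h2 (by omega)]
  calc (Finset.univ.filter fun s : Fin k => r ≤ s.1 ∧ σ s < σ ⟨r - 1, by omega⟩).card
      ≤ (Finset.univ.filter fun s : Fin k => r ≤ s.1).card := by
        apply Finset.card_le_card
        intro a ha
        simp only [Finset.mem_filter] at ha ⊢
        exact ⟨ha.1, ha.2.1⟩
    _ = k - r := card_filter_le_val k r

lemma pOf_bounds {k : ℕ} (σ : Equiv.Perm (Fin k)) {r : ℕ} (h1 : 1 ≤ r) (h2 : r ≤ k) :
    r ≤ pOf k σ r ∧ pOf k σ r ≤ k := by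
  unfold pOf
  rw [if_pos ⟨h1, h2⟩]
  have := cnt_le σ h1 h2
  omega

lemma pOf_eq {k : ℕ} (σ : Equiv.Perm (Fin k)) {r : ℕ} (h1 : 1 ≤ r) (h2 : r ≤ k) :
    pOf k σ r = r + cnt k σ r := if_pos ⟨h1, h2⟩

/-! #### `onelineTail` facts -/

lemma sInj {k : ℕ} (σ : Equiv.Perm (Fin k)) :
    Function.Injective (fun s : Fin k => (σ s).1 + 1) := by
  intro a b h
  simp only at h
  exact σ.injective (Fin.ext (by omega))

lemma onelineTail_zero {k : ℕ} (σ : Equiv.Perm (Fin k)) :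
    onelineTail σ 0 = Finset.Icc 1 k := by
  ext v
  simp only [onelineTail, Finset.mem_image, Finset.mem_filter, Finset.mem_univ, true_and,
    Finset.mem_Icc]
  constructor
  · rintro ⟨s, _, rfl⟩
    have := (σ s).2
    omega
  · rintro ⟨h1, h2⟩
    refine ⟨σ.symm ⟨v - 1, by omega⟩, by omega, ?_⟩
    rw [Equiv.apply_symm_apply]
    simp only [Fin.val_mk]
    omega

lemma onelineTail_succ {k : ℕ} (σ : Equiv.Perm (Fin k)) (r : ℕ) (hr : r < k) :
    onelineTail σ (r + 1) = (onelineTail σ r).erase ((σ ⟨r, hr⟩).1 + 1) := by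
  unfold onelineTail
  rw [← Finset.image_erase (sInj σ)]
  congr 1
  ext s
  simp only [Finset.mem_filter, Finset.mem_univ, true_and, Finset.mem_erase]
  constructor
  · intro h
    refine ⟨fun hc => ?_, by omega⟩
    subst hc
    simp only [Fin.val_mk] at h
    omega
  · rintro ⟨hne, h2⟩
    have : s.1 ≠ r := fun hc => hne (Fin.ext (by simp [Fin.val_mk, hc]))
    omega

lemma mem_onelineTail_self {k : ℕ} (σ : Equiv.Perm (Fin k)) {r : ℕ} (h1 : 1 ≤ r) (h2 : r ≤ k)
    (hh : r - 1 < k) :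
    (σ ⟨r - 1, hh⟩).1 + 1 ∈ onelineTail σ (r - 1) := by
  unfold onelineTail
  refine Finset.mem_image.2 ⟨⟨r - 1, hh⟩, ?_, rfl⟩
  simp only [Finset.mem_filter, Finset.mem_univ, true_and]
  omega

lemma rk_onelineTail {k : ℕ} (σ : Equiv.Perm (Fin k)) {r : ℕ} (h1 : 1 ≤ r) (h2 : r ≤ k)
    (hh : r - 1 < k) :
    rk (onelineTail σ (r - 1)) ((σ ⟨r - 1, hh⟩).1 + 1) = cnt k σ r + 1 := by
  unfold rk onelineTail
  rw [Finset.filter_image]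
  rw [Finset.card_image_of_injective _ (sInj σ)]
  rw [cnt_eq σ h1 h2 hh]
  have hset : ((Finset.univ.filter fun i : Fin k => r - 1 < i.1 + 1).filter
        fun a : Fin k => (σ a).1 + 1 ≤ (σ ⟨r - 1, hh⟩).1 + 1)
      = insert (⟨r - 1, hh⟩ : Fin k)
        (Finset.univ.filter fun s : Fin k => r ≤ s.1 ∧ σ s < σ ⟨r - 1, hh⟩) := by
    ext s
    simp only [Finset.mem_filter, Finset.mem_univ, true_and, Finset.mem_insert, Fin.lt_def,
      Fin.val_mk, Fin.ext_iff]
    constructor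
    · rintro ⟨hs1, hs2⟩
      by_cases hs : s.1 = r - 1
      · exact Or.inl hs
      · refine Or.inr ⟨by omega, ?_⟩
        have hne : σ s ≠ σ ⟨r - 1, hh⟩ := fun hc => hs (by
          have := σ.injective hc
          rw [this])
        have : (σ s).1 ≠ (σ ⟨r - 1, hh⟩).1 := fun hc => hne (Fin.ext hc)
        omega
    · rintro (hs | ⟨hs1, hs2⟩)
      · have : s = ⟨r - 1, hh⟩ := Fin.ext hs
        subst this
        exact ⟨by omega, le_rfl⟩
      · exact ⟨by omega, by omega⟩
  rw [hset, Finset.card_insert_of_notMem]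
  simp only [Finset.mem_filter, Finset.mem_univ, true_and]
  intro hc
  omega

end Aux

section Aux2

open Finset Equiv Equiv.Perm

/-! #### The main invariant: the shapes `ν^{(r)}` track ranks in `onelineTail` -/

lemma invA {k : ℕ} (σ : Equiv.Perm (Fin k)) :
    ∀ r, r ≤ k → ∀ i, r < i → i ≤ k →
      ∃ f, i = nuSeq (fun _ => 0) (pOf k σ) r i + f ∧ f ∈ onelineTail σ r ∧
        rk (onelineTail σ r) f = i - r := by
  intro r
  induction r with
  | zero =>
    intro _ i h0i hik
    refine ⟨i, by simp [nuSeq], ?_, ?_⟩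
    · rw [onelineTail_zero]; exact Finset.mem_Icc.2 ⟨by omega, hik⟩
    · rw [onelineTail_zero]
      unfold rk
      have : (Finset.Icc 1 k).filter (· ≤ i) = Finset.Icc 1 i := by
        ext v; simp only [Finset.mem_filter, Finset.mem_Icc]; omega
      rw [this, Nat.card_Icc]
      omega
  | succ r ih =>
    intro hr1k i hi1 hi2
    have hrk : r < k := by omega
    have hr1k' : r + 1 ≤ k := hr1k
    set c := (σ ⟨r, hrk⟩).1 + 1 with hc
    have hcT : c ∈ onelineTail σ r := by
      have := mem_onelineTail_self σ (r := r + 1) (by omega) hr1k' (by omega)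
      simpa using this
    have hrkc : rk (onelineTail σ r) c = cnt k σ (r + 1) + 1 := by
      have := rk_onelineTail σ (r := r + 1) (by omega) hr1k' (by omega)
      simpa using this
    have hP : pOf k σ (r + 1) = (r + 1) + cnt k σ (r + 1) := pOf_eq σ (by omega) hr1k'
    have hT' : onelineTail σ (r + 1) = (onelineTail σ r).erase c := onelineTail_succ σ r hrk
    simp only [nuSeq]
    by_cases hip : i ≤ pOf k σ (r + 1)
    · obtain ⟨f, hf1, hf2, hf3⟩ := ih (by omega) (i - 1) (by omega) (by omega)
      have hfc : f < c := by
        by_contra hcon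
        push_neg at hcon
        have := rk_le_rk (T := onelineTail σ r) hcon
        omega
      refine ⟨f, ?_, ?_, ?_⟩
      · unfold nuUpdate
        rw [if_pos ⟨by omega, hip⟩]
        omega
      · rw [hT']; exact Finset.mem_erase.2 ⟨by omega, hf2⟩
      · rw [hT', rk_erase_of_lt hfc, hf3]; omega
    · obtain ⟨f, hf1, hf2, hf3⟩ := ih (by omega) i (by omega) (by omega)
      have hcf : c < f := by
        by_contra hcon
        push_neg at hcon
        have := rk_le_rk (T := onelineTail σ r) hcon
        omega
      refine ⟨f, ?_, ?_, ?_⟩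
      · unfold nuUpdate
        rw [if_neg (by omega)]
        exact hf1
      · rw [hT']; exact Finset.mem_erase.2 ⟨by omega, hf2⟩
      · rw [hT', rk_erase_of_gt hcT hcf, hf3]; omega

/-! #### The map from permutations to tunnel hook coverings -/

def gTHC (k : ℕ) (μ : ℕ → ℤ) (σ : Equiv.Perm (Fin k)) : THC k μ (fun _ => 0) where
  p := pOf k σ
  q := fun r =>
    if 1 ≤ r ∧ r ≤ k then nuSeq (fun _ => 0) (pOf k σ) (r - 1) (pOf k σ r) + 1 else 0
  tunnel := by
    intro r hr1 hrk
    have hd : DecFrom k r (nuSeq (fun _ => 0) (pOf k σ) (r - 1)) := by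
      have := decFrom_nuSeq (k := k) (p := pOf k σ) (r - 1) (by omega)
        (fun s hs hsr => pOf_bounds σ hs (by omega))
      rwa [show r - 1 + 1 = r by omega] at this
    have hb := pOf_bounds σ hr1 hrk
    have ht := isTunnel_of (μ := μ) hd hb.1 hb.2
    rw [if_pos ⟨hr1, hrk⟩]
    exact ht
  p_out := by
    intro r h
    unfold pOf
    rw [if_neg (by omega)]
  q_out := by
    intro r h
    rw [if_neg (by omega)]

@[simp] lemma gTHC_p (k : ℕ) (μ : ℕ → ℤ) (σ : Equiv.Perm (Fin k)) :
    (gTHC k μ σ).p = pOf k σ := rfl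

lemma gTHC_q (k : ℕ) (μ : ℕ → ℤ) (σ : Equiv.Perm (Fin k)) (r : ℕ) (h1 : 1 ≤ r) (h2 : r ≤ k) :
    (gTHC k μ σ).q r = nuSeq (fun _ => 0) (pOf k σ) (r - 1) (pOf k σ r) + 1 := by
  show (if 1 ≤ r ∧ r ≤ k then _ else 0) = _
  rw [if_pos ⟨h1, h2⟩]

end Aux2

section Aux3

open Finset Equiv Equiv.Perm

/-! #### Sign as parity of inversions -/

lemma cnt_fin {k : ℕ} (σ : Equiv.Perm (Fin k)) (r : Fin k) :
    cnt k σ (r.1 + 1) =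
      (Finset.univ.filter fun s : Fin k => r < s ∧ σ s < σ r).card := by
  rw [cnt_eq σ (by omega) (Nat.succ_le_of_lt r.2) (by omega)]
  congr 1

lemma sign_eq_signAux' {k : ℕ} (σ : Equiv.Perm (Fin k)) :
    Equiv.Perm.sign σ = Equiv.Perm.signAux σ := by
  refine Equiv.Perm.swap_induction_on σ ?_ ?_
  · simp [Equiv.Perm.signAux_one]
  · intro f x y hxy ih
    rw [Equiv.Perm.sign_mul, Equiv.Perm.signAux_mul, Equiv.Perm.sign_swap hxy,
      Equiv.Perm.signAux_swap hxy, ih]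

lemma signAux_pow {k : ℕ} (σ : Equiv.Perm (Fin k)) :
    Equiv.Perm.signAux σ =
      (-1 : ℤˣ) ^ (((Equiv.Perm.finPairsLT k).filter fun x => σ x.1 ≤ σ x.2).card) := by
  unfold Equiv.Perm.signAux
  rw [Finset.prod_ite, Finset.prod_const, Finset.prod_const, one_pow, mul_one]

lemma card_pairs {k : ℕ} (σ : Equiv.Perm (Fin k)) :
    ((Equiv.Perm.finPairsLT k).filter fun x => σ x.1 ≤ σ x.2).card
      = ∑ r : Fin k, cnt k σ (r.1 + 1) := by
  rw [Finset.card_eq_sum_card_fiberwise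
    (f := fun x : Σ _ : Fin k, Fin k => x.2) (t := Finset.univ) (fun x _ => Finset.mem_univ _)]
  refine Finset.sum_congr rfl fun r _ => ?_
  rw [cnt_fin σ r]
  apply Finset.card_bij (fun x _ => x.1)
  · intro a ha
    simp only [Finset.mem_filter, Finset.mem_univ, true_and] at ha ⊢
    obtain ⟨⟨hmem, hle⟩, h2⟩ := ha
    rw [Equiv.Perm.mem_finPairsLT] at hmem
    refine ⟨by rw [← h2]; exact hmem, ?_⟩
    rcases lt_or_eq_of_le hle with h | h
    · rw [← h2]; exact h
    · exact absurd (σ.injective h) (by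
        intro hc
        rw [hc] at hmem
        exact lt_irrefl _ hmem)
  · intro a ha b hb hab
    simp only [Finset.mem_filter] at ha hb
    obtain ⟨a1, a2⟩ := a
    obtain ⟨b1, b2⟩ := b
    simp only at hab
    have h2 : a2 = b2 := ha.2.trans hb.2.symm
    subst hab; subst h2; rfl
  · intro s hs
    simp only [Finset.mem_filter, Finset.mem_univ, true_and] at hs
    refine ⟨⟨s, r⟩, ?_, rfl⟩
    simp only [Finset.mem_filter]
    exact ⟨⟨Equiv.Perm.mem_finPairsLT.2 hs.1, hs.2.le⟩, trivial⟩

lemma sign_eq_cnt {k : ℕ} (σ : Equiv.Perm (Fin k)) :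
    ((Equiv.Perm.sign σ : ℤˣ) : ℤ) = (-1 : ℤ) ^ (∑ r : Fin k, cnt k σ (r.1 + 1)) := by
  rw [sign_eq_signAux', signAux_pow, card_pairs]
  simp

/-! #### Pulling central signs out of ordered products -/

lemma prod_ofFn_neg_pow : ∀ {n : ℕ} (e : Fin n → ℕ) (A : Fin n → NSym),
    (List.ofFn fun i => (-1 : NSym) ^ e i * A i).prod
      = (-1 : NSym) ^ (∑ i, e i) * (List.ofFn A).prod := by
  intro n
  induction n with
  | zero => intro e A; simp
  | succ n ih =>
    intro e A
    rw [List.ofFn_succ, List.ofFn_succ, List.prod_cons, List.prod_cons]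
    rw [show (fun i : Fin n => (fun i : Fin (n+1) => (-1 : NSym) ^ e i * A i) i.succ)
        = fun i : Fin n => (-1 : NSym) ^ e i.succ * A i.succ from rfl]
    rw [ih (fun i => e i.succ) (fun i => A i.succ), Fin.sum_univ_succ, pow_add]
    have hc : Commute ((-1 : NSym) ^ (∑ i : Fin n, e i.succ)) (A 0) :=
      (Commute.neg_one_left (A 0)).pow_left _
    rw [mul_assoc, mul_assoc]
    congr 1
    rw [← mul_assoc, ← hc.eq, mul_assoc]

end Aux3

section Aux4

open Finset Equiv Equiv.Perm

/-! #### Matching the `hookDelta` values -/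

lemma hookDelta_g {k : ℕ} (μ : ℕ → ℤ) (σ : Equiv.Perm (Fin k)) (r : Fin k) :
    hookDelta μ (nuSeq (fun _ => 0) (pOf k σ) r.1) (r.1 + 1) (pOf k σ (r.1 + 1))
        ((gTHC k μ σ).q (r.1 + 1))
      = μ (r.1 + 1) + (((σ r).1 : ℤ) + 1) - ((r.1 : ℤ) + 1) := by
  have h1 : (1 : ℕ) ≤ r.1 + 1 := by omega
  have h2 : r.1 + 1 ≤ k := Nat.succ_le_of_lt r.2
  rw [gTHC_q k μ σ _ h1 h2]
  simp only [Nat.add_sub_cancel]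
  have hbP := pOf_bounds σ h1 h2
  obtain ⟨f, hf1, hf2, hf3⟩ := invA σ r.1 (by omega) (pOf k σ (r.1 + 1))
    (by omega) hbP.2
  have hPval := pOf_eq σ h1 h2
  have hx : r.1 + 1 - 1 < k := by omega
  have hi2 : (⟨r.1 + 1 - 1, hx⟩ : Fin k) = r := Fin.ext (by simp)
  have hcT : (σ r).1 + 1 ∈ onelineTail σ r.1 := by
    have := mem_onelineTail_self σ (r := r.1 + 1) h1 h2 hx
    rwa [hi2] at this
  have hrkc : rk (onelineTail σ r.1) ((σ r).1 + 1) = cnt k σ (r.1 + 1) + 1 := by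
    have := rk_onelineTail σ (r := r.1 + 1) h1 h2 hx
    rwa [hi2] at this
  have hfc : f = (σ r).1 + 1 := rk_inj hf2 hcT (by rw [hf3, hrkc]; omega)
  have hPf : pOf k σ (r.1 + 1)
      = nuSeq (fun _ => 0) (pOf k σ) r.1 (pOf k σ (r.1 + 1)) + ((σ r).1 + 1) := by
    rw [← hfc]
    exact hf1
  unfold hookDelta
  clear hf1 hf2 hf3 hrkc hcT hi2 hPval hx hbP h1 h2 hfc
  push_cast
  omega

/-! #### Matching the whole THC terms -/

lemma thcTerm_g {k : ℕ} (μ : ℕ → ℤ) (σ : Equiv.Perm (Fin k)) :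
    thcTerm k μ (fun _ => 0) (gTHC k μ σ) =
      (Equiv.Perm.sign σ : ℤ) • (List.ofFn fun i : Fin k =>
        H (μ (i.1 + 1) + (((σ i).1 : ℤ) + 1) - ((i.1 : ℤ) + 1))).prod := by
  have he : ∀ r : Fin k, pOf k σ (r.1 + 1) - (r.1 + 1) = cnt k σ (r.1 + 1) := fun r => by
    have hrk := r.2
    rw [pOf_eq σ (r := r.1 + 1) (by omega) (by omega)]
    omega
  have hstep : ∀ r : Fin k,
      (-1 : NSym) ^ ((gTHC k μ σ).p (r.1 + 1) - (r.1 + 1)) *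
        H (hookDelta μ (nuSeq (fun _ => 0) ((gTHC k μ σ).p) r.1) (r.1 + 1)
          ((gTHC k μ σ).p (r.1 + 1)) ((gTHC k μ σ).q (r.1 + 1)))
      = (-1 : NSym) ^ (cnt k σ (r.1 + 1)) *
        H (μ (r.1 + 1) + (((σ r).1 : ℤ) + 1) - ((r.1 : ℤ) + 1)) := by
    intro r
    rw [gTHC_p, he r, hookDelta_g μ σ r]
  unfold thcTerm
  simp only [hstep]
  rw [prod_ofFn_neg_pow]
  rw [zsmul_eq_mul]
  congr 1
  rw [sign_eq_cnt]
  push_cast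
  ring

/-! #### Injectivity -/

lemma onelineTail_eq_compl {k : ℕ} (σ : Equiv.Perm (Fin k)) (r : ℕ) :
    onelineTail σ r = Finset.Icc 1 k \
      ((Finset.univ.filter fun i : Fin k => i.1 < r).image fun i => (σ i).1 + 1) := by
  ext v
  simp only [onelineTail, Finset.mem_image, Finset.mem_filter, Finset.mem_univ, true_and,
    Finset.mem_sdiff, Finset.mem_Icc]
  constructor
  · rintro ⟨i, hi, rfl⟩
    refine ⟨⟨by omega, by have := (σ i).2; omega⟩, ?_⟩
    rintro ⟨j, hj, hji⟩
    have : j = i := σ.injective (Fin.ext (by omega))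
    omega
  · rintro ⟨⟨hv1, hv2⟩, hn⟩
    refine ⟨σ.symm ⟨v - 1, by omega⟩, ?_, ?_⟩
    · by_contra hc
      push_neg at hc
      exact hn ⟨σ.symm ⟨v - 1, by omega⟩, by omega, by
        rw [Equiv.apply_symm_apply]
        simp only [Fin.val_mk]
        omega⟩
    · rw [Equiv.apply_symm_apply]
      simp only [Fin.val_mk]
      omega

lemma pOf_injective {k : ℕ} {σ σ' : Equiv.Perm (Fin k)} (h : pOf k σ = pOf k σ') : σ = σ' := by
  have key : ∀ r, r ≤ k → ∀ i : Fin k, i.1 < r → σ i = σ' i := by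
    intro r
    induction r with
    | zero => intro _ i hi; omega
    | succ r ih =>
      intro hrk i hir
      by_cases hi : i.1 < r
      · exact ih (by omega) i hi
      · have hieq : i.1 = r := by omega
        have hT : onelineTail σ r = onelineTail σ' r := by
          rw [onelineTail_eq_compl, onelineTail_eq_compl]
          congr 1
          apply Finset.image_congr
          intro j hj
          simp only [Finset.coe_filter, Set.mem_setOf_eq, Finset.mem_univ, true_and] at hj
          show (σ j).1 + 1 = (σ' j).1 + 1
          rw [ih (by omega) j hj]
        have hx : r + 1 - 1 < k := by omega
        have hi2 : (⟨r + 1 - 1, hx⟩ : Fin k) = i := Fin.ext (by simp; omega)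
        have hc1 : (σ i).1 + 1 ∈ onelineTail σ r := by
          have := mem_onelineTail_self σ (r := r + 1) (by omega) hrk hx
          rwa [hi2] at this
        have hc2 : (σ' i).1 + 1 ∈ onelineTail σ r := by
          have := mem_onelineTail_self σ' (r := r + 1) (by omega) hrk hx
          rw [hi2] at this
          rw [hT]
          exact this
        have hr1 : rk (onelineTail σ r) ((σ i).1 + 1) = cnt k σ (r + 1) + 1 := by
          have := rk_onelineTail σ (r := r + 1) (by omega) hrk hx
          rwa [hi2] at this
        have hr2 : rk (onelineTail σ r) ((σ' i).1 + 1) = cnt k σ' (r + 1) + 1 := by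
          have := rk_onelineTail σ' (r := r + 1) (by omega) hrk hx
          rw [hi2] at this
          rw [hT]
          exact this
        have hcnt : cnt k σ (r + 1) = cnt k σ' (r + 1) := by
          have e1 := pOf_eq σ (r := r + 1) (by omega) hrk
          have e2 := pOf_eq σ' (r := r + 1) (by omega) hrk
          rw [h] at e1
          omega
        have := rk_inj hc1 hc2 (by rw [hr1, hr2, hcnt])
        exact Fin.ext (by omega)
  exact Equiv.ext fun i => key k le_rfl i i.2

/-! #### Surjectivity via a counting argument -/

def tupleOf (k : ℕ) (σ : Equiv.Perm (Fin k)) : ∀ r : Fin k, Fin (k - r.1) :=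
  fun r => ⟨cnt k σ (r.1 + 1), by
    have h1 := cnt_le σ (r := r.1 + 1) (by omega) (Nat.succ_le_of_lt r.2)
    have h2 := r.2
    omega⟩

lemma tupleOf_injective {k : ℕ} : Function.Injective (tupleOf k) := by
  intro σ σ' h
  apply pOf_injective (k := k)
  funext r
  by_cases hr : 1 ≤ r ∧ r ≤ k
  · have hc := congrArg Fin.val (congrFun h ⟨r - 1, by omega⟩)
    simp only [tupleOf, Fin.val_mk] at hc
    rw [show r - 1 + 1 = r by omega] at hc
    rw [pOf_eq σ hr.1 hr.2, pOf_eq σ' hr.1 hr.2, hc]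
  · unfold pOf
    rw [if_neg hr, if_neg hr]

lemma tupleOf_bijective {k : ℕ} : Function.Bijective (tupleOf k) := by
  rw [Fintype.bijective_iff_injective_and_card]
  refine ⟨tupleOf_injective, ?_⟩
  have h1 : ∏ r : Fin k, (k - r.1) = Nat.factorial k := by
    rw [Fin.prod_univ_eq_prod_range (fun j => k - j) k,
      ← Finset.prod_range_reflect (fun j => k - j) k]
    have h2 : ∀ j ∈ Finset.range k, k - (k - 1 - j) = j + 1 := by
      intro j hj
      have := Finset.mem_range.1 hj
      omega
    rw [Finset.prod_congr rfl h2]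
    exact Finset.prod_range_add_one_eq_factorial k
  rw [Fintype.card_perm, Fintype.card_pi]
  simp only [Fintype.card_fin]
  rw [h1]

lemma gTHC_bijective {k : ℕ} (μ : ℕ → ℤ) : Function.Bijective (gTHC k μ) := by
  constructor
  · intro σ σ' h
    exact pOf_injective (k := k) (congrArg THC.p h)
  · intro γ
    have hb : ∀ r, 1 ≤ r → r ≤ k → r ≤ γ.p r ∧ γ.p r ≤ k := fun r h1 h2 =>
      ⟨(γ.tunnel r h1 h2).1.1, (γ.tunnel r h1 h2).1.2.1⟩
    obtain ⟨σ, hσ⟩ := tupleOf_bijective.2 (fun r : Fin k =>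
      ⟨γ.p (r.1 + 1) - (r.1 + 1), by
        have hbr := hb (r.1 + 1) (by omega) (Nat.succ_le_of_lt r.2)
        have h2 := r.2
        omega⟩)
    refine ⟨σ, THC.eq_of_p ?_⟩
    funext r
    rw [gTHC_p]
    by_cases hr : 1 ≤ r ∧ r ≤ k
    · have hv := congrArg Fin.val (congrFun hσ ⟨r - 1, by omega⟩)
      simp only [tupleOf, Fin.val_mk] at hv
      rw [show r - 1 + 1 = r by omega] at hv
      have hbr := hb r hr.1 hr.2
      rw [pOf_eq σ hr.1 hr.2]
      omega
    · rw [γ.p_out r (by omega)]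
      unfold pOf
      rw [if_neg hr]

end Aux4

/-- **Theorem 1 (main).** For every integer sequence `μ ∈ ℤ^k`, the immaculate
function decomposes as `I_μ = Σ_{γ ∈ THC_μ} ∏_{r=1}^{k} ε(h(r,τ_r)) H_{Δ(h(r,τ_r))}`,
the sum being over all tunnel hook coverings of `D_μ` and the product taken in
the order `r = 1, …, k`. -/
theorem immaculate_eq_sum_tunnel_hook_coverings (k : ℕ) (hk : 1 ≤ k) (μ : ℕ → ℤ) :
    Imm k μ = ∑ᶠ γ : THC k μ (fun _ => 0), thcTerm k μ (fun _ => 0) γ := by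
  have hbij := gTHC_bijective (k := k) μ
  have hcomp := finsum_eq_of_bijective (gTHC k μ) hbij
    (fun σ => rfl (a := thcTerm k μ (fun _ => 0) (gTHC k μ σ)))
  rw [← hcomp, finsum_eq_sum_of_fintype]
  unfold Imm ndet
  exact Finset.sum_congr rfl fun σ _ => (thcTerm_g μ σ).symm
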